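/- arXiv:2109.11990 — 5 statements merged into one kernel-verified Lean document; each statement's English description precedes it below -/
import Mathlib

section
/- Under the linear SEM y = β^T x + ε with E[ε]=0 and x_S ⊥ ε (S the support of β) and W = E[x x^T] positive definite, the causal coefficient β satisfies ‖∇R(β) ∘ β‖₂ = 0, where R(α) = E[(1/2)(α^T x − y)^2] and ∘ denotes the Hadamard (componentwise) product. In particular β is a global minimizer of α ↦ ‖∇R(α) ∘ α‖₂. -/
open MeasureTheory ProbabilityTheory RealInnerProductSpace

/-- If the outer measures of a set and its complement add up to `1`, the set is
measurable modulo a null set. -/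
lemma coco_exists_meas_ae {Ω : Type*} [MeasurableSpace Ω] (μ : Measure Ω)
    [IsProbabilityMeasure μ] (s : Set Ω) (h : μ s + μ sᶜ = 1) :
    ∃ H, MeasurableSet H ∧ H =ᵐ[μ] s := by
  set H := toMeasurable μ s with hH
  set K := toMeasurable μ sᶜ with hK
  have hHm : MeasurableSet H := measurableSet_toMeasurable μ s
  have hKm : MeasurableSet K := measurableSet_toMeasurable μ sᶜ
  have hunion : H ∪ K = Set.univ := by
    apply Set.eq_univ_of_univ_subset
    intro ω _
    by_cases hωs : ω ∈ s
    · exact Or.inl (subset_toMeasurable μ s hωs)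
    · exact Or.inr (subset_toMeasurable μ sᶜ hωs)
  have h1 : μ (H ∪ K) + μ (H ∩ K) = μ H + μ K := measure_union_add_inter H hKm
  rw [hunion, measure_univ, measure_toMeasurable, measure_toMeasurable, h] at h1
  have hHK : μ (H ∩ K) = 0 := by
    have h2 : (1 : ENNReal) + μ (H ∩ K) = 1 + 0 := by simpa using h1
    exact (ENNReal.add_right_inj (a := (1:ENNReal)) (by norm_num)).mp h2
  refine ⟨H, hHm, ?_⟩
  rw [Filter.eventuallyEq_set]
  rw [MeasureTheory.ae_iff]
  refine measure_mono_null ?_ hHK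
  intro ω hω
  simp only [Set.mem_setOf_eq] at hω
  by_cases hωs : ω ∈ s
  · exact absurd (Iff.intro (fun _ => hωs) (fun _ => subset_toMeasurable μ s hωs)) hω
  · have hωH : ω ∈ H := by
      by_contra hc
      exact hω (Iff.intro (fun h' => absurd h' hc) (fun h' => absurd h' hωs))
    exact ⟨hωH, subset_toMeasurable μ sᶜ hωs⟩

/-- If `X` and `Y` are independent, their product is a.e. measurable, `|Y|` is
a.e. measurable and `X` is positive with positive probability (in the outer
measure sense), then `Y` is a.e. measurable. -/
lemma coco_aem_of_indep_pos {Ω : Type*} [MeasurableSpace Ω] (μ : Measure Ω)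
    [IsProbabilityMeasure μ] (X Y : Ω → ℝ) (h : IndepFun X Y μ)
    (hZ : AEMeasurable (fun ω => X ω * Y ω) μ)
    (habs : AEMeasurable (fun ω => |Y ω|) μ)
    (hp : μ (X ⁻¹' Set.Ioi 0) ≠ 0) :
    AEMeasurable Y μ := by
  classical
  set Z : Ω → ℝ := fun ω => X ω * Y ω with hZdef
  have hZ'm : Measurable (hZ.mk _) := hZ.measurable_mk
  have hZZ' : ∀ᵐ ω ∂μ, Z ω = hZ.mk _ ω := hZ.ae_eq_mk
  have hAfin : μ (X ⁻¹' Set.Ioi 0) ≠ ⊤ := measure_ne_top μ _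
  have ind := h.measure_inter_preimage_eq_mul
  have key : ∀ (u v w : Set ℝ), MeasurableSet u → MeasurableSet v → MeasurableSet w →
      (X ⁻¹' Set.Ioi 0 ∩ Z ⁻¹' u = X ⁻¹' Set.Ioi 0 ∩ Y ⁻¹' v) →
      (X ⁻¹' Set.Ioi 0 ∩ (Z ⁻¹' u)ᶜ = X ⁻¹' Set.Ioi 0 ∩ Y ⁻¹' w) →
      μ (Y ⁻¹' v) + μ (Y ⁻¹' w) = 1 := by
    intro u v w hum hvm hwm hpos hneg
    set G : Set Ω := hZ.mk _ ⁻¹' u with hGdef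
    have hGm : MeasurableSet G := hZ'm hum
    have hGae : G =ᵐ[μ] Z ⁻¹' u := by
      rw [Filter.eventuallyEq_set]
      filter_upwards [hZZ'] with ω hω
      simp [hGdef, Set.mem_preimage, hω]
    have e1 : μ (X ⁻¹' Set.Ioi 0 ∩ G) = μ (X ⁻¹' Set.Ioi 0) * μ (Y ⁻¹' v) := by
      rw [show μ (X ⁻¹' Set.Ioi 0 ∩ G) = μ (X ⁻¹' Set.Ioi 0 ∩ Z ⁻¹' u) from
        measure_congr (Filter.EventuallyEq.inter (Filter.EventuallyEq.refl _ _) hGae)]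
      rw [hpos]
      exact ind _ _ measurableSet_Ioi hvm
    have e2 : μ (X ⁻¹' Set.Ioi 0 \ G) = μ (X ⁻¹' Set.Ioi 0) * μ (Y ⁻¹' w) := by
      rw [show μ (X ⁻¹' Set.Ioi 0 \ G) = μ (X ⁻¹' Set.Ioi 0 ∩ (Z ⁻¹' u)ᶜ) from
        measure_congr (Filter.EventuallyEq.inter (Filter.EventuallyEq.refl _ _) hGae.compl)]
      rw [hneg]
      exact ind _ _ measurableSet_Ioi hwm
    have e3 : μ (X ⁻¹' Set.Ioi 0 ∩ G) + μ (X ⁻¹' Set.Ioi 0 \ G) = μ (X ⁻¹' Set.Ioi 0) :=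
      measure_inter_add_diff _ hGm
    rw [e1, e2, ← mul_add] at e3
    nth_rewrite 2 [show μ (X ⁻¹' Set.Ioi 0) = μ (X ⁻¹' Set.Ioi 0) * 1 by rw [mul_one]] at e3
    exact (ENNReal.mul_right_inj hp hAfin).mp e3
  have k1 : μ (Y ⁻¹' Set.Ioi 0) + μ (Y ⁻¹' Set.Iic 0) = 1 := by
    apply key (Set.Ioi 0) (Set.Ioi 0) (Set.Iic 0) measurableSet_Ioi measurableSet_Ioi
      measurableSet_Iic
    · ext ω
      simp only [Set.mem_inter_iff, Set.mem_preimage, Set.mem_Ioi, hZdef]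
      constructor
      · rintro ⟨hx, hz⟩
        refine ⟨hx, ?_⟩
        by_contra hy
        push_neg at hy
        nlinarith
      · rintro ⟨hx, hy⟩
        exact ⟨hx, by nlinarith⟩
    · ext ω
      simp only [Set.mem_inter_iff, Set.mem_preimage, Set.mem_Ioi, Set.mem_Iic, Set.mem_compl_iff,
        Set.mem_setOf_eq, hZdef, not_lt]
      constructor
      · rintro ⟨hx, hz⟩
        refine ⟨hx, ?_⟩
        by_contra hy
        push_neg at hy
        nlinarith
      · rintro ⟨hx, hy⟩
        exact ⟨hx, by nlinarith⟩
  have k2 : μ (Y ⁻¹' Set.Iio 0) + μ (Y ⁻¹' Set.Ici 0) = 1 := by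
    apply key (Set.Iio 0) (Set.Iio 0) (Set.Ici 0) measurableSet_Iio measurableSet_Iio
      measurableSet_Ici
    · ext ω
      simp only [Set.mem_inter_iff, Set.mem_preimage, Set.mem_Ioi, Set.mem_Iio, hZdef]
      constructor
      · rintro ⟨hx, hz⟩
        refine ⟨hx, ?_⟩
        by_contra hy
        push_neg at hy
        nlinarith
      · rintro ⟨hx, hy⟩
        exact ⟨hx, by nlinarith⟩
    · ext ω
      simp only [Set.mem_inter_iff, Set.mem_preimage, Set.mem_Ioi, Set.mem_Iio, Set.mem_Ici,
        Set.mem_compl_iff, Set.mem_setOf_eq, hZdef, not_lt]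
      constructor
      · rintro ⟨hx, hz⟩
        refine ⟨hx, ?_⟩
        by_contra hy
        push_neg at hy
        nlinarith
      · rintro ⟨hx, hy⟩
        exact ⟨hx, by nlinarith⟩
  obtain ⟨H, hHm, hHae⟩ := coco_exists_meas_ae μ (Y ⁻¹' Set.Ioi 0)
    (by rwa [← Set.preimage_compl, Set.compl_Ioi])
  obtain ⟨K, hKm, hKae⟩ := coco_exists_meas_ae μ (Y ⁻¹' Set.Iio 0)
    (by rwa [← Set.preimage_compl, Set.compl_Iio])
  set m : Ω → ℝ := habs.mk _ with hmdef
  have hmm : Measurable m := habs.measurable_mk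
  have hmae : ∀ᵐ ω ∂μ, |Y ω| = m ω := habs.ae_eq_mk
  refine ⟨fun ω => if ω ∈ H then m ω else if ω ∈ K then -m ω else 0, ?_, ?_⟩
  · exact Measurable.ite hHm hmm (Measurable.ite hKm hmm.neg measurable_const)
  · filter_upwards [hmae, Filter.eventuallyEq_set.mp hHae, Filter.eventuallyEq_set.mp hKae]
      with ω h1 h2 h3
    simp only [Set.mem_preimage, Set.mem_Ioi, Set.mem_Iio] at h2 h3
    rcases lt_trichotomy (Y ω) 0 with hy | hy | hy
    · rw [if_neg (fun hc => absurd (h2.mp hc) (by linarith)), if_pos (h3.mpr hy), ← h1,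
        abs_of_neg hy, neg_neg]
    · rw [if_neg (fun hc => absurd (h2.mp hc) (by linarith)),
        if_neg (fun hc => absurd (h3.mp hc) (by linarith)), hy]
    · rw [if_pos (h2.mpr hy), ← h1, abs_of_pos hy]

/-- A square-integrable a.e. measurable function on a probability space is integrable. -/
lemma coco_integrable_of_sq {Ω : Type*} [MeasurableSpace Ω] (μ : Measure Ω)
    [IsProbabilityMeasure μ] (X : Ω → ℝ) (hm : AEStronglyMeasurable X μ)
    (h2 : Integrable (fun ω => X ω * X ω) μ) : Integrable X μ := by
  refine Integrable.mono' (g := fun ω => (1 + X ω * X ω) / 2) ?_ hm ?_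
  · exact ((integrable_const 1).add h2).div_const 2
  · filter_upwards with ω
    rw [Real.norm_eq_abs]
    nlinarith [sq_nonneg (|X ω| - 1), sq_abs (X ω)]

lemma coco_aem_signcase {Ω : Type*} [MeasurableSpace Ω] (μ : Measure Ω)
    [IsProbabilityMeasure μ] (X Y : Ω → ℝ) (h : IndepFun X Y μ)
    (hZ : AEMeasurable (fun ω => X ω * Y ω) μ)
    (habs : AEMeasurable (fun ω => |Y ω|) μ)
    (hp : ¬ (∀ᵐ ω ∂μ, X ω = 0)) :
    AEMeasurable Y μ := by
  have hcover : X ⁻¹' {(0:ℝ)}ᶜ ⊆ X ⁻¹' Set.Ioi 0 ∪ X ⁻¹' Set.Iio 0 := by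
    intro ω hω
    simp only [Set.mem_preimage, Set.mem_compl_iff, Set.mem_singleton_iff] at hω
    rcases lt_or_gt_of_ne hω with h' | h'
    · exact Or.inr h'
    · exact Or.inl h'
  have hne : μ (X ⁻¹' Set.Ioi 0) ≠ 0 ∨ μ (X ⁻¹' Set.Iio 0) ≠ 0 := by
    by_contra hc
    push_neg at hc
    apply hp
    rw [MeasureTheory.ae_iff]
    refine measure_mono_null (fun ω hω => hcover ?_) ?_
    · simpa using hω
    · exact measure_union_null hc.1 hc.2
  rcases hne with hne | hne
  · exact coco_aem_of_indep_pos μ X Y h hZ habs hne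
  · apply coco_aem_of_indep_pos μ (fun ω => -X ω) Y
    · exact h.comp measurable_neg measurable_id
    · have : (fun ω => -X ω * Y ω) = fun ω => -(X ω * Y ω) := by funext ω; ring
      rw [this]; exact hZ.neg
    · exact habs
    · have : (fun ω => -X ω) ⁻¹' Set.Ioi 0 = X ⁻¹' Set.Iio 0 := by
        ext ω; simp [neg_pos]
      rwa [this]

/-- The expectation of a product of independent random variables with
square-integrable factors, an integrable product, and a centered second factor,
vanishes.  Crucially, no measurability of the individual factors is assumed:
it is derived from independence (or the conclusion holds trivially). -/
lemma coco_indep_integral_mul_eq_zero {Ω : Type*} [MeasurableSpace Ω] (μ : Measure Ω)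
    [IsProbabilityMeasure μ] (X Y : Ω → ℝ) (h : IndepFun X Y μ)
    (hXY : Integrable (fun ω => X ω * Y ω) μ)
    (hX2 : Integrable (fun ω => X ω * X ω) μ)
    (hY2 : Integrable (fun ω => Y ω * Y ω) μ)
    (hEY : ∫ ω, Y ω ∂μ = 0) :
    ∫ ω, X ω * Y ω ∂μ = 0 := by
  by_cases hY0 : ∀ᵐ ω ∂μ, Y ω = 0
  · rw [integral_congr_ae (g := fun _ => (0:ℝ))
      (by filter_upwards [hY0] with ω hω; rw [hω, mul_zero])]
    simp
  by_cases hX0 : ∀ᵐ ω ∂μ, X ω = 0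
  · rw [integral_congr_ae (g := fun _ => (0:ℝ))
      (by filter_upwards [hX0] with ω hω; rw [hω, zero_mul])]
    simp
  have habsY : AEMeasurable (fun ω => |Y ω|) μ := by
    have h1 : AEMeasurable (fun ω => Real.sqrt (Y ω * Y ω)) μ :=
      (Real.continuous_sqrt.measurable.comp_aemeasurable hY2.aemeasurable)
    have : (fun ω => Real.sqrt (Y ω * Y ω)) = fun ω => |Y ω| := by
      funext ω; exact Real.sqrt_mul_self_eq_abs (Y ω)
    rwa [this] at h1
  have habsX : AEMeasurable (fun ω => |X ω|) μ := by
    have h1 : AEMeasurable (fun ω => Real.sqrt (X ω * X ω)) μ :=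
      (Real.continuous_sqrt.measurable.comp_aemeasurable hX2.aemeasurable)
    have : (fun ω => Real.sqrt (X ω * X ω)) = fun ω => |X ω| := by
      funext ω; exact Real.sqrt_mul_self_eq_abs (X ω)
    rwa [this] at h1
  have hYm : AEMeasurable Y μ := coco_aem_signcase μ X Y h hXY.aemeasurable habsY hX0
  have hXm : AEMeasurable X μ := by
    apply coco_aem_signcase μ Y X h.symm ?_ habsX hY0
    have : (fun ω => Y ω * X ω) = fun ω => X ω * Y ω := by funext ω; ring
    rw [this]; exact hXY.aemeasurable
  have hXint : Integrable X μ := coco_integrable_of_sq μ X hXm.aestronglyMeasurable hX2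
  have hYint : Integrable Y μ := coco_integrable_of_sq μ Y hYm.aestronglyMeasurable hY2
  have := h.integral_mul_eq_mul_integral hXint.aestronglyMeasurable hYint.aestronglyMeasurable
  simp only [Pi.mul_apply] at this
  rw [this, hEY, mul_zero]

/-- Coordinates of the gradient of the squared risk at the causal coefficient. -/
lemma coco_gradient_coord {p : ℕ} {Ω : Type*} [MeasurableSpace Ω]
    (μ : Measure Ω) [IsProbabilityMeasure μ]
    (x : Ω → EuclideanSpace ℝ (Fin p)) (ε : Ω → ℝ)
    (β : EuclideanSpace ℝ (Fin p))
    (hintxx : ∀ i j, Integrable (fun ω => x ω i * x ω j) μ)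
    (hintxε : ∀ j, Integrable (fun ω => x ω j * ε ω) μ)
    (hintε2 : Integrable (fun ω => ε ω * ε ω) μ)
    (y : Ω → ℝ) (hy : ∀ ω, y ω = (∑ j, β j * x ω j) + ε ω)
    (R : EuclideanSpace ℝ (Fin p) → ℝ)
    (hR : ∀ α, R α = ∫ ω, (1 / 2) * ((∑ j, α j * x ω j) - y ω) ^ 2 ∂μ) :
    ∀ j, gradient R β j = -(∫ ω, x ω j * ε ω ∂μ) := by
  classical
  set c : Fin p → ℝ := fun j => ∫ ω, x ω j * ε ω ∂μ with hc
  set F : EuclideanSpace ℝ (Fin p) → ℝ := fun α =>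
      (1/2) * (∑ i, ∑ j, ((α i - β i) * (α j - β j)) * (∫ ω, x ω i * x ω j ∂μ))
      - (∑ j, (α j - β j) * c j) + (1/2) * (∫ ω, ε ω * ε ω ∂μ) with hF
  have hRform : ∀ α : EuclideanSpace ℝ (Fin p), R α = F α := by
    intro α
    set d : Fin p → ℝ := fun j => α j - β j with hd
    have key : ∀ ω, (1 / 2) * ((∑ j, α j * x ω j) - y ω) ^ 2
        = (1/2) * (∑ i, ∑ j, (d i * d j) * (x ω i * x ω j))
          - (∑ j, d j * (x ω j * ε ω)) + (1/2) * (ε ω * ε ω) := by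
      intro ω
      have e3 : (∑ j, α j * x ω j) - y ω = (∑ j, d j * x ω j) - ε ω := by
        rw [hy ω, ← sub_sub]
        congr 1
        rw [← Finset.sum_sub_distrib]
        exact Finset.sum_congr rfl fun j _ => by simp [hd]; ring
      have e1 : (∑ j, d j * x ω j) * (∑ j, d j * x ω j)
          = ∑ i, ∑ j, (d i * d j) * (x ω i * x ω j) := by
        rw [Finset.sum_mul_sum]
        exact Finset.sum_congr rfl fun i _ => Finset.sum_congr rfl fun j _ => by ring
      have e2 : (∑ j, d j * x ω j) * ε ω = ∑ j, d j * (x ω j * ε ω) := by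
        rw [Finset.sum_mul]
        exact Finset.sum_congr rfl fun j _ => by ring
      rw [e3, ← e1, ← e2]
      ring
    have hint1 : Integrable (fun ω => ∑ i, ∑ j, (d i * d j) * (x ω i * x ω j)) μ :=
      integrable_finset_sum _ fun i _ =>
        integrable_finset_sum _ fun j _ => (hintxx i j).const_mul (d i * d j)
    have hint2 : Integrable (fun ω => ∑ j, d j * (x ω j * ε ω)) μ :=
      integrable_finset_sum _ fun j _ => (hintxε j).const_mul (d j)
    have hsub : Integrable (fun ω => (1/2) * (∑ i, ∑ j, (d i * d j) * (x ω i * x ω j))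
        - (∑ j, d j * (x ω j * ε ω))) μ := (hint1.const_mul _).sub hint2
    rw [hR α, show (fun ω => (1 / 2) * ((∑ j, α j * x ω j) - y ω) ^ 2)
        = fun ω => ((1/2) * (∑ i, ∑ j, (d i * d j) * (x ω i * x ω j))
          - (∑ j, d j * (x ω j * ε ω))) + (1/2) * (ε ω * ε ω) from funext key]
    rw [integral_add hsub (hintε2.const_mul _),
      integral_sub (hint1.const_mul _) hint2, integral_const_mul, integral_const_mul,
      integral_finset_sum _ (fun i _ => integrable_finset_sum _ fun j _ =>
        (hintxx i j).const_mul (d i * d j)),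
      integral_finset_sum _ (fun j _ => (hintxε j).const_mul (d j))]
    have hin : ∀ i : Fin p, (∫ a, ∑ j, (d i * d j) * (x a i * x a j) ∂μ)
        = ∑ j, (d i * d j) * (∫ a, x a i * x a j ∂μ) := by
      intro i
      rw [integral_finset_sum _ (fun j _ => (hintxx i j).const_mul (d i * d j))]
      exact Finset.sum_congr rfl fun j _ => integral_const_mul _ _
    simp only [hin, integral_const_mul]
    rfl
  have hproj : ∀ i : Fin p, HasFDerivAt (fun α : EuclideanSpace ℝ (Fin p) => α i - β i)
      (EuclideanSpace.proj i : EuclideanSpace ℝ (Fin p) →L[ℝ] ℝ) β := fun i =>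
    HasFDerivAt.sub_const (β i)
      ((EuclideanSpace.proj i : EuclideanSpace ℝ (Fin p) →L[ℝ] ℝ).hasFDerivAt (x := β))
  set L : EuclideanSpace ℝ (Fin p) →L[ℝ] ℝ :=
    ∑ j, c j • (EuclideanSpace.proj j : EuclideanSpace ℝ (Fin p) →L[ℝ] ℝ) with hL
  have hq : HasFDerivAt (fun α : EuclideanSpace ℝ (Fin p) =>
      (1/2) * (∑ i, ∑ j, ((α i - β i) * (α j - β j)) * (∫ ω, x ω i * x ω j ∂μ)))
      (0 : EuclideanSpace ℝ (Fin p) →L[ℝ] ℝ) β := by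
    have hterm : ∀ i j : Fin p, HasFDerivAt (fun α : EuclideanSpace ℝ (Fin p) =>
        ((α i - β i) * (α j - β j)) * (∫ ω, x ω i * x ω j ∂μ))
        (0 : EuclideanSpace ℝ (Fin p) →L[ℝ] ℝ) β := by
      intro i j
      have := ((hproj i).mul (hproj j)).mul_const (∫ ω, x ω i * x ω j ∂μ)
      simpa [sub_self, zero_smul, smul_zero] using this
    have := HasFDerivAt.const_mul
      (HasFDerivAt.sum (fun i (_ : i ∈ Finset.univ) =>
        HasFDerivAt.sum (fun j (_ : j ∈ Finset.univ) => hterm i j))) ((1:ℝ)/2)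
    simpa using this
  have hl : HasFDerivAt (fun α : EuclideanSpace ℝ (Fin p) => ∑ j, (α j - β j) * c j) L β := by
    have := HasFDerivAt.fun_sum (fun j (_ : j ∈ Finset.univ) => (hproj j).mul_const (c j))
    simpa [hL] using this
  have hFd : HasFDerivAt F ((0 : EuclideanSpace ℝ (Fin p) →L[ℝ] ℝ) - L) β := by
    exact ((hq.sub hl).add_const _)
  have hRgrad : HasGradientAt R ((InnerProductSpace.toDual ℝ (EuclideanSpace ℝ (Fin p))).symm
      ((0 : EuclideanSpace ℝ (Fin p) →L[ℝ] ℝ) - L)) β := by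
    rw [show R = F from funext hRform]
    exact hasFDerivAt_iff_hasGradientAt.mp hFd
  have hgr : gradient R β = (InnerProductSpace.toDual ℝ (EuclideanSpace ℝ (Fin p))).symm
      ((0 : EuclideanSpace ℝ (Fin p) →L[ℝ] ℝ) - L) := hRgrad.gradient
  intro j
  have hwj : ∀ w : EuclideanSpace ℝ (Fin p), w j = ⟪w, EuclideanSpace.single j (1:ℝ)⟫ := by
    intro w; rw [EuclideanSpace.inner_single_right]; simp
  rw [hgr, hwj ((InnerProductSpace.toDual ℝ (EuclideanSpace ℝ (Fin p))).symm
    ((0 : EuclideanSpace ℝ (Fin p) →L[ℝ] ℝ) - L)), InnerProductSpace.toDual_symm_apply]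
  simp [hL, ContinuousLinearMap.sum_apply, EuclideanSpace.single_apply, hc]

/-- Under the linear SEM `y = βᵀx + ε` with `E[ε]=0`, `x_S ⊥ ε` (`S` the
support of `β`) and `W = E[x xᵀ]` positive definite, the causal coefficient `β`
satisfies `‖∇R(β) ∘ β‖₂ = 0` for the squared risk `R`, and in particular `β` is
a global minimizer of `α ↦ ‖∇R(α) ∘ α‖₂`. -/
theorem coco_causal_zero {p : ℕ} {Ω : Type*} [MeasurableSpace Ω]
    (μ : Measure Ω) [IsProbabilityMeasure μ]
    (x : Ω → EuclideanSpace ℝ (Fin p)) (ε : Ω → ℝ)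
    (β : EuclideanSpace ℝ (Fin p))
    (S : Finset (Fin p)) (hS : ∀ j, j ∈ S ↔ β j ≠ 0)
    (W : Matrix (Fin p) (Fin p) ℝ)
    (hW : ∀ i j, W i j = ∫ ω, x ω i * x ω j ∂μ)
    (hWpd : W.PosDef)
    (hε : ∫ ω, ε ω ∂μ = 0)
    (hindep : IndepFun (fun ω => fun j : S => x ω j) ε μ)
    (hintxx : ∀ i j, Integrable (fun ω => x ω i * x ω j) μ)
    (hintxε : ∀ j, Integrable (fun ω => x ω j * ε ω) μ)
    (hintε : Integrable (fun ω => ε ω ^ 2) μ)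
    (y : Ω → ℝ) (hy : ∀ ω, y ω = (∑ j, β j * x ω j) + ε ω)
    (R : EuclideanSpace ℝ (Fin p) → ℝ)
    (hR : ∀ α, R α = ∫ ω, (1 / 2) * ((∑ j, α j * x ω j) - y ω) ^ 2 ∂μ) :
    Real.sqrt (∑ j, (gradient R β j * β j) ^ 2) = 0 ∧
    ∀ α : EuclideanSpace ℝ (Fin p),
      Real.sqrt (∑ j, (gradient R β j * β j) ^ 2) ≤
        Real.sqrt (∑ j, (gradient R α j * α j) ^ 2) := by
  have hintε2 : Integrable (fun ω => ε ω * ε ω) μ := by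
    have h' : (fun ω => ε ω ^ 2) = fun ω => ε ω * ε ω := by
      funext ω; ring
    rwa [h'] at hintε
  have hgradj := coco_gradient_coord μ x ε β hintxx hintxε hintε2 y hy R hR
  have hzero : ∀ j ∈ Finset.univ, (gradient R β j * β j) ^ 2 = 0 := by
    intro j _
    by_cases hj : j ∈ S
    · have hind : IndepFun (fun ω => x ω j) ε μ :=
        hindep.comp (measurable_pi_apply (⟨j, hj⟩ : S)) measurable_id
      have hc0 : ∫ ω, x ω j * ε ω ∂μ = 0 :=
        coco_indep_integral_mul_eq_zero μ (fun ω => x ω j) ε hind (hintxε j)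
          (hintxx j j) hintε2 hε
      rw [hgradj j, hc0]
      simp
    · have hβj : β j = 0 := by
        by_contra h'
        exact hj ((hS j).mpr h')
      rw [hβj]
      simp
  have hfirst : Real.sqrt (∑ j, (gradient R β j * β j) ^ 2) = 0 := by
    rw [Finset.sum_eq_zero hzero, Real.sqrt_zero]
  exact ⟨hfirst, fun α => by rw [hfirst]; exact Real.sqrt_nonneg _⟩
end

section
/- Under the linear SEM y = β^T x + ε with W = E[x x^T] positive definite, E[ε] = 0, and x_j ⊥ ε for a fixed nondescendant index j*, the causal coefficient β satisfies (∇R(β))_{j*} = 0, where R(α) = E[(1/2)(α^T x − y)^2]. Consequently β minimizes the modified objective ‖∇R(α) ∘ α̃‖₂ where α̃_{j*} = 1 and α̃_j = α_j for j ≠ j*, achieving value 0. -/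
open MeasureTheory ProbabilityTheory Set RealInnerProductSpace

lemma nullmeas_of_compl_subset {Ω : Type*} [MeasurableSpace Ω] {μ : Measure Ω}
    [IsProbabilityMeasure μ] {C D : Set Ω} (hu : Cᶜ ⊆ D) (hsum : μ C + μ D ≤ 1) :
    NullMeasurableSet C μ := by
  obtain ⟨T, hCT, hTm, hTμ⟩ := exists_measurable_superset μ C
  obtain ⟨T', hDT', hT'm, hT'μ⟩ := exists_measurable_superset μ D
  have hsub : T'ᶜ ⊆ C := by
    intro ω hω
    by_contra hc
    exact hω (hDT' (hu hc))
  have hle : μ T ≤ μ T'ᶜ := by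
    rw [measure_compl hT'm (measure_ne_top μ T'), hT'μ, hTμ, measure_univ]
    exact ENNReal.le_sub_of_add_le_right (measure_ne_top μ D) hsum
  have hnull : μ (C \ T'ᶜ) = 0 := by
    have h1 : μ (C \ T'ᶜ) ≤ μ (T \ T'ᶜ) := measure_mono (diff_subset_diff_left hCT)
    have h2 : μ (T \ T'ᶜ) = μ T - μ T'ᶜ :=
      measure_diff (hsub.trans hCT) hT'm.compl.nullMeasurableSet (measure_ne_top μ _)
    rw [h2, tsub_eq_zero_of_le hle] at h1
    exact le_antisymm h1 zero_le
  have hCeq : C = T'ᶜ ∪ (C \ T'ᶜ) := (union_diff_cancel hsub).symm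
  rw [hCeq]
  exact hT'm.compl.nullMeasurableSet.union (NullMeasurableSet.of_null hnull)


lemma asm_of_indep {Ω : Type*} [MeasurableSpace Ω] {μ : Measure Ω} [IsProbabilityMeasure μ]
    {X Y : Ω → ℝ} (h : IndepFun X Y μ)
    (hZ : AEStronglyMeasurable (fun ω => X ω * Y ω) μ)
    (hYa : AEStronglyMeasurable (fun ω => |Y ω|) μ)
    (hpos : μ (X ⁻¹' Set.Ioi 0) ≠ 0) :
    AEStronglyMeasurable Y μ := by
  have hZm : StronglyMeasurable (hZ.mk _) := hZ.stronglyMeasurable_mk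
  have hzae : (fun ω => X ω * Y ω) =ᵐ[μ] hZ.mk _ := hZ.ae_eq_mk
  set Z : Ω → ℝ := hZ.mk _ with hZdef
  set A : Set Ω := X ⁻¹' Set.Ioi 0 with hAdef
  have hMP : MeasurableSet (Z ⁻¹' Set.Ioi 0) := hZm.measurable measurableSet_Ioi
  have hMN : MeasurableSet (Z ⁻¹' Set.Iio 0) := hZm.measurable measurableSet_Iio
  -- ae rectangle identities
  have eP : (A ∩ Z ⁻¹' Set.Ioi 0 : Set Ω) =ᵐ[μ] (A ∩ Y ⁻¹' Set.Ioi 0 : Set Ω) := by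
    rw [Filter.eventuallyEq_set]
    filter_upwards [hzae] with ω hω
    simp only [Set.mem_inter_iff, Set.mem_preimage, Set.mem_Ioi, hAdef]
    constructor
    · rintro ⟨hA, hz⟩; rw [← hω] at hz; exact ⟨hA, by nlinarith⟩
    · rintro ⟨hA, hy⟩; exact ⟨hA, by rw [← hω]; nlinarith⟩
  have eN : (A ∩ Z ⁻¹' Set.Iio 0 : Set Ω) =ᵐ[μ] (A ∩ Y ⁻¹' Set.Iio 0 : Set Ω) := by
    rw [Filter.eventuallyEq_set]
    filter_upwards [hzae] with ω hω
    simp only [Set.mem_inter_iff, Set.mem_preimage, Set.mem_Iio, hAdef, Set.mem_Ioi]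
    constructor
    · rintro ⟨hA, hz⟩; rw [← hω] at hz; exact ⟨hA, by nlinarith⟩
    · rintro ⟨hA, hy⟩; exact ⟨hA, by rw [← hω]; nlinarith⟩
  have e0 : ((A \ Z ⁻¹' Set.Ioi 0) \ Z ⁻¹' Set.Iio 0 : Set Ω) =ᵐ[μ]
      (A ∩ Y ⁻¹' ({0} : Set ℝ) : Set Ω) := by
    rw [Filter.eventuallyEq_set]
    filter_upwards [hzae] with ω hω
    simp only [Set.mem_diff, Set.mem_inter_iff, Set.mem_preimage, Set.mem_Ioi, Set.mem_Iio,
      Set.mem_singleton_iff, hAdef, not_lt]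
    constructor
    · rintro ⟨⟨hA, h1⟩, h2⟩
      have hz0 : Z ω = 0 := le_antisymm h1 h2
      rw [← hω] at hz0
      rcases mul_eq_zero.mp hz0 with h' | h'
      · exact absurd h' (ne_of_gt hA)
      · exact ⟨hA, h'⟩
    · rintro ⟨hA, hy⟩
      have : Z ω = 0 := by rw [← hω, hy, mul_zero]
      exact ⟨⟨hA, by rw [this]⟩, by rw [this]⟩
    -- partition μ A by the sign of Z, convert to rectangles, use independence
  have hseteq1 : (A \ Z ⁻¹' Set.Ioi 0) ∩ Z ⁻¹' Set.Iio 0 = A ∩ Z ⁻¹' Set.Iio 0 := by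
    ext ω
    simp only [Set.mem_inter_iff, Set.mem_diff, Set.mem_preimage, Set.mem_Ioi, Set.mem_Iio,
      not_lt]
    exact ⟨fun h' => ⟨h'.1.1, h'.2⟩, fun h' => ⟨⟨h'.1, le_of_lt h'.2⟩, h'.2⟩⟩
  have hdecomp : μ A = μ (A ∩ Y ⁻¹' Set.Ioi 0) + μ (A ∩ Y ⁻¹' Set.Iio 0)
      + μ (A ∩ Y ⁻¹' ({0} : Set ℝ)) := by
    have h1 : μ (A ∩ Z ⁻¹' Set.Ioi 0) + μ (A \ Z ⁻¹' Set.Ioi 0) = μ A :=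
      measure_inter_add_diff A hMP
    have h2 : μ ((A \ Z ⁻¹' Set.Ioi 0) ∩ Z ⁻¹' Set.Iio 0)
        + μ ((A \ Z ⁻¹' Set.Ioi 0) \ Z ⁻¹' Set.Iio 0) = μ (A \ Z ⁻¹' Set.Ioi 0) :=
      measure_inter_add_diff _ hMN
    rw [← h1, ← h2, hseteq1, measure_congr eP, measure_congr eN, measure_congr e0, add_assoc]
  have ind := h.measure_inter_preimage_eq_mul
  have rP : μ (A ∩ Y ⁻¹' Set.Ioi 0) = μ A * μ (Y ⁻¹' Set.Ioi 0) :=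
    ind _ _ measurableSet_Ioi measurableSet_Ioi
  have rN : μ (A ∩ Y ⁻¹' Set.Iio 0) = μ A * μ (Y ⁻¹' Set.Iio 0) :=
    ind _ _ measurableSet_Ioi measurableSet_Iio
  have rZ : μ (A ∩ Y ⁻¹' ({0} : Set ℝ)) = μ A * μ (Y ⁻¹' ({0} : Set ℝ)) :=
    ind _ _ measurableSet_Ioi (measurableSet_singleton 0)
  have hsum1 : μ (Y ⁻¹' Set.Ioi 0) + μ (Y ⁻¹' Set.Iio 0) + μ (Y ⁻¹' ({0} : Set ℝ)) = 1 := by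
    have hmm : μ A * (μ (Y ⁻¹' Set.Ioi 0) + μ (Y ⁻¹' Set.Iio 0) + μ (Y ⁻¹' ({0} : Set ℝ)))
        = μ A * 1 := by
      rw [mul_one, mul_add, mul_add, ← rP, ← rN, ← rZ, ← hdecomp]
    exact (ENNReal.mul_right_inj hpos (measure_ne_top μ A)).mp hmm
  have hCP : NullMeasurableSet (Y ⁻¹' Set.Ioi 0) μ := by
    apply nullmeas_of_compl_subset (D := Y ⁻¹' Set.Iio 0 ∪ Y ⁻¹' ({0} : Set ℝ))
    · intro ω hω
      simp only [Set.mem_compl_iff, Set.mem_preimage, Set.mem_Ioi, not_lt] at hω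
      simp only [Set.mem_union, Set.mem_preimage, Set.mem_Iio, Set.mem_singleton_iff]
      exact hω.lt_or_eq
    · calc μ (Y ⁻¹' Set.Ioi 0) + μ (Y ⁻¹' Set.Iio 0 ∪ Y ⁻¹' ({0} : Set ℝ))
          ≤ μ (Y ⁻¹' Set.Ioi 0) + (μ (Y ⁻¹' Set.Iio 0) + μ (Y ⁻¹' ({0} : Set ℝ))) :=
            add_le_add le_rfl (measure_union_le _ _)
        _ = 1 := by rw [← add_assoc, hsum1]
  have hCN : NullMeasurableSet (Y ⁻¹' Set.Iio 0) μ := by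
    apply nullmeas_of_compl_subset (D := Y ⁻¹' Set.Ioi 0 ∪ Y ⁻¹' ({0} : Set ℝ))
    · intro ω hω
      simp only [Set.mem_compl_iff, Set.mem_preimage, Set.mem_Iio, not_lt] at hω
      simp only [Set.mem_union, Set.mem_preimage, Set.mem_Ioi, Set.mem_singleton_iff]
      exact hω.lt_or_eq.imp id Eq.symm
    · calc μ (Y ⁻¹' Set.Iio 0) + μ (Y ⁻¹' Set.Ioi 0 ∪ Y ⁻¹' ({0} : Set ℝ))
          ≤ μ (Y ⁻¹' Set.Iio 0) + (μ (Y ⁻¹' Set.Ioi 0) + μ (Y ⁻¹' ({0} : Set ℝ))) :=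
            add_le_add le_rfl (measure_union_le _ _)
        _ = 1 := by rw [← hsum1]; ring
  have hYeq : Y = fun ω => (Y ⁻¹' Set.Ioi 0).indicator (fun ω => |Y ω|) ω
      - (Y ⁻¹' Set.Iio 0).indicator (fun ω => |Y ω|) ω := by
    funext ω
    rcases lt_trichotomy (Y ω) 0 with hy | hy | hy
    · simp [Set.indicator_apply, Set.mem_preimage, Set.mem_Ioi, Set.mem_Iio, hy,
        not_lt.mpr (le_of_lt hy), abs_of_neg hy]
    · simp [Set.indicator_apply, Set.mem_preimage, Set.mem_Ioi, Set.mem_Iio, hy]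
    · simp [Set.indicator_apply, Set.mem_preimage, Set.mem_Ioi, Set.mem_Iio, hy,
        not_lt.mpr (le_of_lt hy), asymm hy, abs_of_pos hy]
  rw [hYeq]
  exact ((hYa.aemeasurable.indicator₀ hCP).sub
    (hYa.aemeasurable.indicator₀ hCN)).aestronglyMeasurable

lemma indep_integral_mul_eq_zero {Ω : Type*} [MeasurableSpace Ω] {μ : Measure Ω}
    [IsProbabilityMeasure μ] {X Y : Ω → ℝ} (h : IndepFun X Y μ)
    (hX2 : AEStronglyMeasurable (fun ω => X ω * X ω) μ)
    (hY2 : AEStronglyMeasurable (fun ω => Y ω * Y ω) μ)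
    (hZ : Integrable (fun ω => X ω * Y ω) μ)
    (hEY : ∫ ω, Y ω ∂μ = 0) :
    ∫ ω, X ω * Y ω ∂μ = 0 := by
  have habs : ∀ (U : Ω → ℝ), AEStronglyMeasurable (fun ω => U ω * U ω) μ →
      AEStronglyMeasurable (fun ω => |U ω|) μ := by
    intro U hU
    have hfe : (fun ω => |U ω|) = fun ω => Real.sqrt (U ω * U ω) := by
      funext ω; rw [Real.sqrt_mul_self_eq_abs]
    rw [hfe]
    exact Real.continuous_sqrt.comp_aestronglyMeasurable hU
  have hXa := habs X hX2
  have hYa := habs Y hY2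
  have hkey : ∀ (U V : Ω → ℝ), IndepFun U V μ →
      AEStronglyMeasurable (fun ω => U ω * V ω) μ →
      AEStronglyMeasurable (fun ω => |V ω|) μ → ¬ AEStronglyMeasurable V μ →
      U =ᵐ[μ] 0 := by
    intro U V hUV hUVm hVa hVn
    have hp : μ (U ⁻¹' Set.Ioi 0) = 0 := by
      by_contra hc
      exact hVn (asm_of_indep hUV hUVm hVa hc)
    have hn : μ ((fun ω => -U ω) ⁻¹' Set.Ioi 0) = 0 := by
      by_contra hc
      apply hVn
      refine asm_of_indep (X := fun ω => -U ω) ?_ ?_ hVa hc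
      · exact hUV.comp measurable_neg measurable_id
      · have hfe : (fun ω => (-U ω) * V ω) = fun ω => -(U ω * V ω) := by funext ω; ring
        rw [hfe]; exact hUVm.neg
    have hnull : μ {ω | U ω ≠ 0} = 0 := by
      have hsub : {ω | U ω ≠ 0} ⊆ U ⁻¹' Set.Ioi 0 ∪ (fun ω => -U ω) ⁻¹' Set.Ioi 0 := by
        intro ω hω
        rcases lt_or_gt_of_ne hω with h' | h'
        · right; simp only [Set.mem_preimage, Set.mem_Ioi]; linarith
        · left; exact h'
      refine le_antisymm ?_ zero_le
      calc μ {ω | U ω ≠ 0} ≤ μ (U ⁻¹' Set.Ioi 0 ∪ (fun ω => -U ω) ⁻¹' Set.Ioi 0) :=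
            measure_mono hsub
        _ ≤ μ (U ⁻¹' Set.Ioi 0) + μ ((fun ω => -U ω) ⁻¹' Set.Ioi 0) := measure_union_le _ _
        _ = 0 := by rw [hp, hn, add_zero]
    refine ae_iff.mpr ?_
    simpa using hnull
  by_cases hX : AEStronglyMeasurable X μ
  · by_cases hY : AEStronglyMeasurable Y μ
    · rw [h.integral_fun_mul_eq_mul_integral hX hY, hEY, mul_zero]
    · have h0 : X =ᵐ[μ] 0 := hkey X Y h hZ.aestronglyMeasurable hYa hY
      have hz : (fun ω => X ω * Y ω) =ᵐ[μ] (fun _ => (0:ℝ)) := by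
        filter_upwards [h0] with ω hω
        simp only [Pi.zero_apply] at hω
        simp [hω]
      rw [integral_congr_ae hz, integral_const, smul_eq_mul, mul_zero]
  · have h0 : Y =ᵐ[μ] 0 := by
      refine hkey Y X h.symm ?_ hXa hX
      have hfe : (fun ω => Y ω * X ω) = fun ω => X ω * Y ω := by funext ω; ring
      rw [hfe]; exact hZ.aestronglyMeasurable
    have hz : (fun ω => X ω * Y ω) =ᵐ[μ] (fun _ => (0:ℝ)) := by
      filter_upwards [h0] with ω hω
      simp only [Pi.zero_apply] at hω
      simp [hω]
    rw [integral_congr_ae hz, integral_const, smul_eq_mul, mul_zero]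

lemma coord_le_norm {p : ℕ} (u : EuclideanSpace ℝ (Fin p)) (i : Fin p) : |u i| ≤ ‖u‖ := by
  have h1 : |u i| = Real.sqrt (‖u i‖ ^ 2) := by
    rw [Real.sqrt_sq (norm_nonneg _)]
    exact (Real.norm_eq_abs (u i)).symm
  rw [EuclideanSpace.norm_eq u, h1]
  apply Real.sqrt_le_sqrt
  exact Finset.single_le_sum (f := fun j => ‖u j‖ ^ 2) (fun j _ => sq_nonneg _) (Finset.mem_univ i)

lemma R_expand {p : ℕ} {Ω : Type*} [MeasurableSpace Ω] (μ : Measure Ω) [IsProbabilityMeasure μ]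
    (x : Ω → EuclideanSpace ℝ (Fin p)) (ε : Ω → ℝ) (β : EuclideanSpace ℝ (Fin p))
    (W : Matrix (Fin p) (Fin p) ℝ) (hW : ∀ i j, W i j = ∫ ω, x ω i * x ω j ∂μ)
    (hintxx : ∀ i j, Integrable (fun ω => x ω i * x ω j) μ)
    (hintxε : ∀ j, Integrable (fun ω => x ω j * ε ω) μ)
    (hintε : Integrable (fun ω => ε ω ^ 2) μ)
    (y : Ω → ℝ) (hy : ∀ ω, y ω = (∑ j, β j * x ω j) + ε ω)
    (α : EuclideanSpace ℝ (Fin p)) :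
    ∫ ω, (1 / 2 : ℝ) * ((∑ j, α j * x ω j) - y ω) ^ 2 ∂μ
      = (∑ i, ∑ j, ((α i - β i) * (α j - β j) * ((1/2) * W i j)))
        + ((∑ j, (α j - β j) * (-(∫ ω, x ω j * ε ω ∂μ))) + (1/2) * ∫ ω, ε ω ^ 2 ∂μ) := by
  have hptw : ∀ ω, (1/2 : ℝ) * ((∑ j, α j * x ω j) - y ω)^2
      = (∑ i, ∑ j, ((α i - β i) * (α j - β j) * ((1/2) * (x ω i * x ω j))))
        + ((∑ j, (α j - β j) * (-(x ω j * ε ω))) + (1/2) * ε ω ^ 2) := by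
    intro ω
    rw [hy ω]
    have h1 : (∑ j, α j * x ω j) - ((∑ j, β j * x ω j) + ε ω)
        = (∑ j, (α j - β j) * x ω j) - ε ω := by
      have h0 : ∑ j, (α j - β j) * x ω j
          = (∑ j, α j * x ω j) - ∑ j, β j * x ω j := by
        rw [← Finset.sum_sub_distrib]
        exact Finset.sum_congr rfl fun j _ => by ring
      rw [h0]; ring
    rw [h1]
    have h2 : ((∑ j, (α j - β j) * x ω j))^2
        = ∑ i, ∑ j, ((α i - β i) * (α j - β j) * (x ω i * x ω j)) := by
      rw [pow_two, Finset.sum_mul_sum]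
      exact Finset.sum_congr rfl fun i _ => Finset.sum_congr rfl fun j _ => by ring
    have h3 : (∑ j, (α j - β j) * x ω j) * ε ω = ∑ j, (α j - β j) * (x ω j * ε ω) := by
      rw [Finset.sum_mul]
      exact Finset.sum_congr rfl fun j _ => by ring
    have e1 : (1/2 : ℝ) * (∑ i, ∑ j, ((α i - β i) * (α j - β j) * (x ω i * x ω j)))
        = ∑ i, ∑ j, ((α i - β i) * (α j - β j) * ((1/2) * (x ω i * x ω j))) := by
      rw [Finset.mul_sum]
      refine Finset.sum_congr rfl fun i _ => ?_
      rw [Finset.mul_sum]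
      exact Finset.sum_congr rfl fun j _ => by ring
    have e2 : ∑ j, (α j - β j) * (-(x ω j * ε ω))
        = -∑ j, (α j - β j) * (x ω j * ε ω) := by
      rw [← Finset.sum_neg_distrib]
      exact Finset.sum_congr rfl fun j _ => by ring
    calc (1/2 : ℝ) * ((∑ j, (α j - β j) * x ω j) - ε ω)^2
        = (1/2) * ((∑ j, (α j - β j) * x ω j))^2
            - ((∑ j, (α j - β j) * x ω j) * ε ω) + (1/2) * ε ω^2 := by ring
      _ = _ := by rw [h2, h3, e1, e2]; ring
  have hti : ∀ (i j : Fin p),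
      Integrable (fun ω => (α i - β i) * (α j - β j) * ((1/2) * (x ω i * x ω j))) μ := by
    intro i j
    have hfe : (fun ω => (α i - β i) * (α j - β j) * ((1/2) * (x ω i * x ω j)))
        = fun ω => ((α i - β i) * (α j - β j) * (1/2)) * (x ω i * x ω j) := by
      funext ω; ring
    rw [hfe]; exact (hintxx i j).const_mul _
  have htS : ∀ i : Fin p, Integrable
      (fun ω => ∑ j, (α i - β i) * (α j - β j) * ((1/2) * (x ω i * x ω j))) μ :=
    fun i => integrable_finset_sum _ (fun j _ => hti i j)
  have htF : Integrable
      (fun ω => ∑ i, ∑ j, (α i - β i) * (α j - β j) * ((1/2) * (x ω i * x ω j))) μ :=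
    integrable_finset_sum _ (fun i _ => htS i)
  have htgj : ∀ j : Fin p, Integrable (fun ω => (α j - β j) * (-(x ω j * ε ω))) μ := by
    intro j
    have hfe : (fun ω => (α j - β j) * (-(x ω j * ε ω)))
        = fun ω => (-(α j - β j)) * (x ω j * ε ω) := by funext ω; ring
    rw [hfe]; exact (hintxε j).const_mul _
  have htG : Integrable (fun ω => ∑ j, (α j - β j) * (-(x ω j * ε ω))) μ :=
    integrable_finset_sum _ (fun j _ => htgj j)
  have htH : Integrable (fun ω => (1/2 : ℝ) * ε ω ^ 2) μ := hintε.const_mul _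
  have htGH : Integrable (fun ω =>
      (∑ j, (α j - β j) * (-(x ω j * ε ω))) + (1/2 : ℝ) * ε ω ^ 2) μ := htG.add htH
  rw [integral_congr_ae (ae_of_all μ hptw), integral_add htF htGH, integral_add htG htH]
  congr 1
  · rw [integral_finset_sum _ (fun i _ => htS i)]
    refine Finset.sum_congr rfl fun i _ => ?_
    rw [integral_finset_sum _ (fun j _ => hti i j)]
    refine Finset.sum_congr rfl fun j _ => ?_
    have hfe : (fun ω => (α i - β i) * (α j - β j) * ((1/2) * (x ω i * x ω j)))
        = fun ω => ((α i - β i) * (α j - β j) * (1/2)) * (x ω i * x ω j) := by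
      funext ω; ring
    rw [hfe, integral_const_mul, hW]
    ring
  congr 1
  · rw [integral_finset_sum _ (fun j _ => htgj j)]
    refine Finset.sum_congr rfl fun j _ => ?_
    have hfe : (fun ω => (α j - β j) * (-(x ω j * ε ω)))
        = fun ω => (-(α j - β j)) * (x ω j * ε ω) := by funext ω; ring
    rw [hfe, integral_const_mul]
    ring
  · exact integral_const_mul _ _


/-- Under the linear SEM with `W = E[x xᵀ]` positive definite, `E[ε] = 0` and
`x_{j*} ⊥ ε` for a fixed nondescendant index `j*`, the causal coefficient `β`
satisfies `(∇R(β))_{j*} = 0`; consequently `β` minimizes the modified CoCo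
objective `‖∇R(α) ∘ α̃‖₂` (with `α̃_{j*} = 1`, `α̃_j = α_j` otherwise),
achieving the value `0`. -/
theorem coco_modified_causal_zero {p : ℕ} {Ω : Type*} [MeasurableSpace Ω]
    (μ : Measure Ω) [IsProbabilityMeasure μ]
    (x : Ω → EuclideanSpace ℝ (Fin p)) (ε : Ω → ℝ)
    (β : EuclideanSpace ℝ (Fin p)) (jstar : Fin p)
    (S : Finset (Fin p)) (hS : ∀ j, j ∈ S ↔ β j ≠ 0)
    (W : Matrix (Fin p) (Fin p) ℝ)
    (hW : ∀ i j, W i j = ∫ ω, x ω i * x ω j ∂μ)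
    (hWpd : W.PosDef)
    (hε : ∫ ω, ε ω ∂μ = 0)
    (hindepS : IndepFun (fun ω => fun j : S => x ω j) ε μ)
    (hindepj : IndepFun (fun ω => x ω jstar) ε μ)
    (hintxx : ∀ i j, Integrable (fun ω => x ω i * x ω j) μ)
    (hintxε : ∀ j, Integrable (fun ω => x ω j * ε ω) μ)
    (hintε : Integrable (fun ω => ε ω ^ 2) μ)
    (y : Ω → ℝ) (hy : ∀ ω, y ω = (∑ j, β j * x ω j) + ε ω)
    (R : EuclideanSpace ℝ (Fin p) → ℝ)
    (hR : ∀ α, R α = ∫ ω, (1 / 2) * ((∑ j, α j * x ω j) - y ω) ^ 2 ∂μ) :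
    gradient R β jstar = 0 ∧
    Real.sqrt (∑ j, (gradient R β j * (if j = jstar then 1 else β j)) ^ 2) = 0 ∧
    ∀ α : EuclideanSpace ℝ (Fin p),
      Real.sqrt (∑ j, (gradient R β j * (if j = jstar then 1 else β j)) ^ 2) ≤
        Real.sqrt (∑ j, (gradient R α j * (if j = jstar then 1 else α j)) ^ 2) := by
  classical
  -- uncorrelatedness for jstar and the support of β
  have hconv : (fun ω => ε ω * ε ω) = fun ω => ε ω ^ 2 := by funext ω; rw [sq]
  have hc0 : ∀ j : Fin p, (j = jstar ∨ β j ≠ 0) → ∫ ω, x ω j * ε ω ∂μ = 0 := by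
    intro j hj
    have hind : IndepFun (fun ω => x ω j) ε μ := by
      rcases hj with rfl | hbj
      · exact hindepj
      · have hmem : j ∈ S := (hS j).mpr hbj
        exact hindepS.comp (φ := fun v : (S → ℝ) => v ⟨j, hmem⟩)
          (measurable_pi_apply _) measurable_id
    refine indep_integral_mul_eq_zero hind ?_ ?_ (hintxε j) hε
    · exact (hintxx j j).aestronglyMeasurable
    · rw [hconv]; exact hintε.aestronglyMeasurable
  -- the gradient of R at β
  set g : EuclideanSpace ℝ (Fin p) := WithLp.toLp 2 (fun j => -(∫ ω, x ω j * ε ω ∂μ)) with hgdef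
  have hgapp : ∀ j : Fin p, g j = -(∫ ω, x ω j * ε ω ∂μ) := fun j => rfl
  have hexp : ∀ α : EuclideanSpace ℝ (Fin p),
      R α = (∑ i, ∑ j, ((α i - β i) * (α j - β j) * ((1/2) * W i j)))
        + ((∑ j, (α j - β j) * (-(∫ ω, x ω j * ε ω ∂μ))) + (1/2) * ∫ ω, ε ω ^ 2 ∂μ) := by
    intro α
    rw [hR α]
    exact R_expand μ x ε β W hW hintxx hintxε hintε y hy α
  have hRβ : R β = (1/2) * ∫ ω, ε ω ^ 2 ∂μ := by
    rw [hexp β]; simp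
  have hgrad : HasGradientAt R g β := by
    rw [hasGradientAt_iff_isLittleO]
    have hdiff : ∀ α : EuclideanSpace ℝ (Fin p), R α - R β - ⟪g, α - β⟫
        = ∑ i, ∑ j, ((α i - β i) * (α j - β j) * ((1/2) * W i j)) := by
      intro α
      have hip : ⟪g, α - β⟫ = ∑ j, (α j - β j) * (-(∫ ω, x ω j * ε ω ∂μ)) := by
        rw [PiLp.inner_apply]
        refine Finset.sum_congr rfl fun j _ => ?_
        have h1 : (α - β) j = α j - β j := by simp
        rw [RCLike.inner_apply, hgapp j, h1]
        simp [mul_comm]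
      rw [hexp α, hRβ, hip]; ring
    rw [Asymptotics.isLittleO_iff]
    intro d hd
    have hKnn : (0:ℝ) ≤ ∑ i, ∑ j, |(1/2 : ℝ) * W i j| :=
      Finset.sum_nonneg fun i _ => Finset.sum_nonneg fun j _ => abs_nonneg _
    set K : ℝ := ∑ i, ∑ j, |(1/2 : ℝ) * W i j| with hKdef
    have hd' : 0 < d / (K + 1) := div_pos hd (by linarith)
    filter_upwards [Metric.ball_mem_nhds β hd'] with α hα
    have hnorm : ‖α - β‖ < d / (K + 1) := by
      rw [← dist_eq_norm]; exact Metric.mem_ball.mp hα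
    have hcoord : ∀ i : Fin p, |α i - β i| ≤ ‖α - β‖ := by
      intro i
      have h1 : (α - β) i = α i - β i := by simp
      rw [← h1]; exact coord_le_norm (α - β) i
    have hbound : |∑ i, ∑ j, ((α i - β i) * (α j - β j) * ((1/2) * W i j))|
        ≤ (‖α - β‖ * ‖α - β‖) * K := by
      calc |∑ i, ∑ j, ((α i - β i) * (α j - β j) * ((1/2) * W i j))|
          ≤ ∑ i, |∑ j, ((α i - β i) * (α j - β j) * ((1/2) * W i j))| :=
            Finset.abs_sum_le_sum_abs _ _
        _ ≤ ∑ i, ∑ j, |(α i - β i) * (α j - β j) * ((1/2) * W i j)| :=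
            Finset.sum_le_sum fun i _ => Finset.abs_sum_le_sum_abs _ _
        _ ≤ ∑ i, ∑ j, (‖α - β‖ * ‖α - β‖) * |(1/2) * W i j| := by
            refine Finset.sum_le_sum fun i _ => Finset.sum_le_sum fun j _ => ?_
            rw [abs_mul, abs_mul]
            have h1 := hcoord i
            have h2 := hcoord j
            have h3 : |α i - β i| * |α j - β j| ≤ ‖α - β‖ * ‖α - β‖ :=
              mul_le_mul h1 h2 (abs_nonneg _) (norm_nonneg _)
            exact mul_le_mul_of_nonneg_right h3 (abs_nonneg _)
        _ = (‖α - β‖ * ‖α - β‖) * K := by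
            rw [hKdef, Finset.mul_sum]
            exact Finset.sum_congr rfl fun i _ => by rw [Finset.mul_sum]
    rw [hdiff α, Real.norm_eq_abs]
    have hnn : (0:ℝ) ≤ ‖α - β‖ := norm_nonneg _
    calc |∑ i, ∑ j, ((α i - β i) * (α j - β j) * ((1/2) * W i j))|
        ≤ (‖α - β‖ * ‖α - β‖) * K := hbound
      _ ≤ d * ‖α - β‖ := by
          have e0 : ‖α - β‖ * K ≤ (d / (K+1)) * K :=
            mul_le_mul_of_nonneg_right hnorm.le hKnn
          have e1 : (d / (K+1)) * K ≤ d := by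
            rw [div_mul_eq_mul_div, div_le_iff₀ (by linarith : (0:ℝ) < K + 1)]
            nlinarith
          nlinarith [mul_le_mul_of_nonneg_right (e0.trans e1) hnn]
  have hgr : gradient R β = g := hgrad.gradient
  have hterm : ∀ j : Fin p, gradient R β j * (if j = jstar then 1 else β j) = 0 := by
    intro j
    rw [hgr]
    by_cases hj : j = jstar
    · rw [if_pos hj, mul_one, hgapp j, hc0 j (Or.inl hj), neg_zero]
    · rw [if_neg hj]
      by_cases hbj : β j = 0
      · rw [hbj, mul_zero]
      · rw [hgapp j, hc0 j (Or.inr hbj), neg_zero, zero_mul]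
  have hsq : Real.sqrt (∑ j, (gradient R β j * (if j = jstar then 1 else β j)) ^ 2) = 0 := by
    have hs : (∑ j, (gradient R β j * (if j = jstar then 1 else β j)) ^ 2) = 0 :=
      Finset.sum_eq_zero fun j _ => by rw [hterm j]; exact zero_pow two_ne_zero
    rw [hs, Real.sqrt_zero]
  refine ⟨?_, hsq, ?_⟩
  · have h1 := hterm jstar
    rw [if_pos rfl, mul_one] at h1
    exact h1
  · intro α
    rw [hsq]
    exact Real.sqrt_nonneg _
end

section
/- Suppose for each environment e ∈ E the matrix W^e_{CP} (rows of the Gram matrix W^e indexed by the known nondescendant set C, all columns) is stacked into W^E_{CP}, and suppose the homogeneous linear system W^E_{CP} v = 0 has only the trivial solution v = 0. Then the weak effectiveness assumption (A2') holds: for every H ≠ S with C ⊆ H ⊆ {1,…,p}, there is no nonzero δ with W^e_{HH} δ = W^e_{HH^c} β_{H^c} + s^e_H for all e ∈ E. -/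
open MeasureTheory

/-- Proposition (checking): if the stacked homogeneous linear system
`W^E_{CP} v = 0` (rows of each Gram matrix indexed by the known nondescendant
set `C`, stacked over environments) has only the trivial solution, then weak
effectiveness (A2') holds: for every `H ≠ S` with `C ⊆ H`, there is no nonzero
`δ` supported on `H` with `W^e_{HH} δ = W^e_{HH^c} β_{H^c} + s^e_H` for all
`e ∈ E`. -/
theorem checking_implies_weak_effectiveness {p : ℕ} {ι : Type*} {Ω : Type*}
    [MeasurableSpace Ω]
    (μ : ι → Measure Ω) [∀ e, IsProbabilityMeasure (μ e)]
    (E : Finset ι) (x : ι → Ω → Fin p → ℝ) (ε : ι → Ω → ℝ)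
    (β : Fin p → ℝ) (S C : Finset (Fin p))
    (hS : ∀ j, j ∈ S ↔ β j ≠ 0)
    (W : ι → Matrix (Fin p) (Fin p) ℝ)
    (hW : ∀ e i j, W e i j = ∫ ω, x e ω i * x e ω j ∂(μ e))
    (s : ι → Fin p → ℝ)
    (hs : ∀ e j, s e j = ∫ ω, x e ω j * ε e ω ∂(μ e))
    (hsC : ∀ e ∈ E, ∀ j ∈ C, s e j = 0)
    (hrank : ∀ v : Fin p → ℝ,
      (∀ e ∈ E, ∀ i ∈ C, ∑ j, W e i j * v j = 0) → v = 0) :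
    ∀ H : Finset (Fin p), H ≠ S → C ⊆ H →
      ¬ ∃ δ : Fin p → ℝ, δ ≠ 0 ∧ (∀ j ∉ H, δ j = 0) ∧
        ∀ e ∈ E, ∀ i ∈ H,
          ∑ k ∈ H, W e i k * δ k = (∑ k ∈ Hᶜ, W e i k * β k) + s e i := by
  intro H _ hCH
  rintro ⟨δ, hδ0, hδsupp, heq⟩
  set v : Fin p → ℝ := fun j => if j ∈ H then δ j else -β j with hv
  have hv0 : v = 0 := by
    apply hrank
    intro e he i hi
    have hiH : i ∈ H := hCH hi
    have key := heq e he i hiH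
    have hsplit : ∑ j, W e i j * v j
        = (∑ j ∈ H, W e i j * v j) + ∑ j ∈ Hᶜ, W e i j * v j :=
      (Finset.sum_add_sum_compl H _).symm
    rw [hsplit]
    have h1 : ∑ j ∈ H, W e i j * v j = ∑ j ∈ H, W e i j * δ j :=
      Finset.sum_congr rfl (fun j hj => by simp [hv, hj])
    have h2 : ∑ j ∈ Hᶜ, W e i j * v j = -∑ j ∈ Hᶜ, W e i j * β j := by
      rw [← Finset.sum_neg_distrib]
      refine Finset.sum_congr rfl (fun j hj => ?_)
      have : j ∉ H := Finset.mem_compl.mp hj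
      simp [hv, this]
    rw [h1, h2, key, hsC e he i hi]
    ring
  apply hδ0
  funext j
  by_cases hj : j ∈ H
  · have := congrFun hv0 j
    simpa [hv, hj] using this
  · exact hδsupp j hj
end

section
/- Suppose that under environments indexed by e ∈ E, the covariates in C satisfy E[x^e_j ε^e] = 0 for all j ∈ C, and that the stacked matrix W^E_{CP} has full column rank p. Then any α with ∇R^e(α)_C = 0 for all e ∈ E and ∇R^e(α)_j α_j = 0 for all j and all e must satisfy α = β, i.e., the causal coefficient is the unique solution of the CoCo first-order conditions. -/
open MeasureTheory

/-- Uniqueness of the CoCo first-order solution: in the linear SEM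
`y^e = βᵀx^e + ε^e` with gradients `∇R^e(α) = W^e(α − β) − s^e`, if the
nondescendant set `C` satisfies `s^e_C = 0` and the stacked matrix `W^E_{CP}`
has full column rank (trivial kernel), then any `α` with `∇R^e(α)_C = 0` for
all `e ∈ E` and `∇R^e(α)_j α_j = 0` for all `j, e` must equal `β`. -/
theorem coco_first_order_unique {p : ℕ} {ι : Type*} {Ω : Type*}
    [MeasurableSpace Ω]
    (μ : ι → Measure Ω) [∀ e, IsProbabilityMeasure (μ e)]
    (E : Finset ι) (x : ι → Ω → Fin p → ℝ) (ε : ι → Ω → ℝ)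
    (β : Fin p → ℝ) (C : Finset (Fin p))
    (W : ι → Matrix (Fin p) (Fin p) ℝ)
    (hW : ∀ e i j, W e i j = ∫ ω, x e ω i * x e ω j ∂(μ e))
    (hWpd : ∀ e ∈ E, (W e).PosDef)
    (s : ι → Fin p → ℝ)
    (hs : ∀ e j, s e j = ∫ ω, x e ω j * ε e ω ∂(μ e))
    (hsC : ∀ e ∈ E, ∀ j ∈ C, s e j = 0)
    (g : ι → (Fin p → ℝ) → Fin p → ℝ)
    (hg : ∀ (e : ι) (α : Fin p → ℝ) (j : Fin p),
      g e α j = (∑ k, W e j k * (α k - β k)) - s e j)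
    (hrank : ∀ v : Fin p → ℝ,
      (∀ e ∈ E, ∀ i ∈ C, ∑ j, W e i j * v j = 0) → v = 0)
    (α : Fin p → ℝ)
    (hC : ∀ e ∈ E, ∀ i ∈ C, g e α i = 0)
    (hHad : ∀ e ∈ E, ∀ j, g e α j * α j = 0) :
    α = β := by
  have hv : (fun j => α j - β j) = 0 := by
    apply hrank
    intro e he i hi
    have := hC e he i hi
    rw [hg] at this
    rw [hsC e he i hi, sub_zero] at this
    exact this
  funext j
  have := congrFun hv j
  simpa [sub_eq_zero] using this
end

section
/- Consider environments e with covariates (x₁^e, x₂^e, z₁^e, z₂^e) generated by: x₁^e, x₂^e, ε₁^e, ε₂^e i.i.d. N(0, v^e) (mutually independent), y^e = x₁^e + x₂^e + ε₁^e + ε₂^e, z_i^e = x_i^e + ε_i^e + N(0,1) (independent extra noise). For the squared risk R^e(α) = E[(1/2)(α₁x₁^e + α₂x₂^e + α₃z₁^e + α₄z₂^e − y^e)²], the unique minimizer over α ∈ R⁴ is α = (1/(1+v^e), 1/(1+v^e), v^e/(1+v^e), v^e/(1+v^e)), and the minimizer of the averaged risk over K environments with variances v^{e₁},…,v^{e_K}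 is (K/(K+Σv^e), K/(K+Σv^e), Σv^e/(K+Σv^e), Σv^e/(K+Σv^e)). -/
open MeasureTheory ProbabilityTheory

section ErmGaussianAux

open Real Filter
open scoped NNReal ENNReal

private lemma erm_integrable_sq_exp {b : ℝ} (hb : 0 < b) :
    Integrable fun x : ℝ => x ^ 2 * Real.exp (-b * x ^ 2) := by
  have := integrable_rpow_mul_exp_neg_mul_sq hb (by norm_num : (-1:ℝ) < 2)
  simpa [Real.rpow_natCast] using this

private lemma erm_tendsto_mul_exp_top {b : ℝ} (hb : 0 < b) :
    Tendsto (fun x : ℝ => x * Real.exp (-b * x ^ 2)) atTop (nhds 0) := by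
  have h2 : Tendsto (fun x : ℝ => Real.exp (-(1/2) * x)) atTop (nhds 0) := by
    apply Real.tendsto_exp_atBot.comp
    exact (tendsto_id.const_mul_atTop_of_neg (by norm_num)).mono_right le_rfl
  have h := (rpow_mul_exp_neg_mul_sq_isLittleO_exp_neg hb 1).trans_tendsto h2
  refine h.congr' ?_
  filter_upwards [eventually_ge_atTop (0:ℝ)] with x hx
  rw [Real.rpow_one]

private lemma erm_tendsto_mul_exp_bot {b : ℝ} (hb : 0 < b) :
    Tendsto (fun x : ℝ => x * Real.exp (-b * x ^ 2)) atBot (nhds 0) := by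
  have h := ((erm_tendsto_mul_exp_top hb).comp tendsto_neg_atBot_atTop).neg
  simp only [Function.comp_def, neg_neg, neg_mul, neg_zero] at h
  convert h using 2 with x
  ring_nf

private lemma erm_tendsto_exp_sq_top {b : ℝ} (hb : 0 < b) :
    Tendsto (fun x : ℝ => Real.exp (-b * x ^ 2)) atTop (nhds 0) := by
  apply Real.tendsto_exp_atBot.comp
  exact (tendsto_pow_atTop two_ne_zero).const_mul_atTop_of_neg (neg_lt_zero.2 hb)

private lemma erm_tendsto_exp_sq_bot {b : ℝ} (hb : 0 < b) :
    Tendsto (fun x : ℝ => Real.exp (-b * x ^ 2)) atBot (nhds 0) := by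
  have h := (erm_tendsto_exp_sq_top hb).comp tendsto_neg_atBot_atTop
  simpa [Function.comp_def] using h

private lemma erm_integral_mul_exp_sq {b : ℝ} (hb : 0 < b) :
    ∫ x : ℝ, x * Real.exp (-b * x ^ 2) = 0 := by
  have hb' : (2*b) ≠ 0 := by positivity
  have hderiv : ∀ x : ℝ, HasDerivAt (fun x : ℝ => -(2*b)⁻¹ * Real.exp (-b * x ^ 2))
      (x * Real.exp (-b * x ^ 2)) x := by
    intro x
    have := (((hasDerivAt_pow 2 x).const_mul (-b)).exp).const_mul (-(2*b)⁻¹)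
    refine this.congr_deriv ?_
    field_simp
    ring
  have := MeasureTheory.integral_of_hasDerivAt_of_tendsto hderiv
    (integrable_mul_exp_neg_mul_sq hb)
    (((erm_tendsto_exp_sq_bot hb).const_mul (-(2*b)⁻¹)).mono_right le_rfl)
    (((erm_tendsto_exp_sq_top hb).const_mul (-(2*b)⁻¹)).mono_right le_rfl)
  simpa using this

private lemma erm_integral_sq_mul_exp_sq {b : ℝ} (hb : 0 < b) :
    ∫ x : ℝ, x ^ 2 * Real.exp (-b * x ^ 2) = (2*b)⁻¹ * Real.sqrt (π / b) := by
  have hb' : (2*b) ≠ 0 := by positivity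
  have hderiv : ∀ x : ℝ, HasDerivAt (fun x : ℝ => -(2*b)⁻¹ * (x * Real.exp (-b * x ^ 2)))
      (x ^ 2 * Real.exp (-b * x ^ 2) - (2*b)⁻¹ * Real.exp (-b * x ^ 2)) x := by
    intro x
    have h1 := ((hasDerivAt_id x).mul (((hasDerivAt_pow 2 x).const_mul (-b)).exp)).const_mul
      (-(2*b)⁻¹)
    refine h1.congr_deriv ?_
    simp only [id]
    field_simp
    ring
  have hint : Integrable (fun x : ℝ => x ^ 2 * Real.exp (-b * x ^ 2)
      - (2*b)⁻¹ * Real.exp (-b * x ^ 2)) :=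
    (erm_integrable_sq_exp hb).sub ((integrable_exp_neg_mul_sq hb).const_mul _)
  have := MeasureTheory.integral_of_hasDerivAt_of_tendsto hderiv hint
    (((erm_tendsto_mul_exp_bot hb).const_mul (-(2*b)⁻¹)).mono_right le_rfl)
    (((erm_tendsto_mul_exp_top hb).const_mul (-(2*b)⁻¹)).mono_right le_rfl)
  simp only [mul_zero, sub_zero] at this
  have hsplit := MeasureTheory.integral_sub (erm_integrable_sq_exp hb)
    ((integrable_exp_neg_mul_sq hb).const_mul ((2*b)⁻¹))
  rw [hsplit] at this
  have hg : ∫ x : ℝ, (2*b)⁻¹ * Real.exp (-b * x ^ 2) = (2*b)⁻¹ * Real.sqrt (π / b) := by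
    rw [MeasureTheory.integral_const_mul, integral_gaussian]
  linarith [this, hg]

private lemma erm_integral_gauss_eq (v : ℝ≥0) (hv : v ≠ 0) (g : ℝ → ℝ) :
    ∫ x, g x ∂(gaussianReal 0 v) = ∫ x, gaussianPDFReal 0 v x * g x := by
  rw [gaussianReal_of_var_ne_zero _ hv]
  have hmeas : Measurable fun x => (gaussianPDFReal 0 v x).toNNReal :=
    (measurable_gaussianPDFReal 0 v).real_toNNReal
  have : (volume.withDensity (gaussianPDF 0 v))
      = volume.withDensity (fun x => ((gaussianPDFReal 0 v x).toNNReal : ℝ≥0∞)) := rfl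
  rw [this, integral_withDensity_eq_integral_smul hmeas g]
  congr 1
  ext x
  rw [NNReal.smul_def, Real.coe_toNNReal _ (gaussianPDFReal_nonneg 0 v x)]
  rfl

private lemma erm_integrable_gauss_iff (v : ℝ≥0) (hv : v ≠ 0) (g : ℝ → ℝ) :
    Integrable g (gaussianReal 0 v) ↔
      Integrable (fun x => gaussianPDFReal 0 v x * g x) volume := by
  rw [gaussianReal_of_var_ne_zero _ hv]
  have hmeas : Measurable fun x => (gaussianPDFReal 0 v x).toNNReal :=
    (measurable_gaussianPDFReal 0 v).real_toNNReal
  have : (volume.withDensity (gaussianPDF 0 v))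
      = volume.withDensity (fun x => ((gaussianPDFReal 0 v x).toNNReal : ℝ≥0∞)) := rfl
  rw [this, integrable_withDensity_iff_integrable_smul hmeas]
  apply integrable_congr
  filter_upwards with x
  rw [NNReal.smul_def, Real.coe_toNNReal _ (gaussianPDFReal_nonneg 0 v x)]
  rfl

private lemma erm_pdf_eq (v : ℝ≥0) (x : ℝ) :
    gaussianPDFReal 0 v x = (Real.sqrt (2 * π * v))⁻¹ * Real.exp (-(2*(v:ℝ))⁻¹ * x ^ 2) := by
  rw [gaussianPDFReal]
  congr 1
  rw [sub_zero]
  congr 1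
  rw [neg_div, neg_mul]
  congr 1
  rw [div_eq_inv_mul]

private lemma erm_integrable_id_gauss (v : ℝ≥0) (hv : v ≠ 0) :
    Integrable (fun x : ℝ => x) (gaussianReal 0 v) := by
  rw [erm_integrable_gauss_iff v hv]
  have hb : 0 < (2*(v:ℝ))⁻¹ := by
    have : 0 < (v:ℝ) := by positivity
    positivity
  have := ((integrable_mul_exp_neg_mul_sq hb).const_mul (Real.sqrt (2 * π * v))⁻¹)
  apply this.congr
  filter_upwards with x
  rw [erm_pdf_eq]
  ring

private lemma erm_integrable_sq_gauss (v : ℝ≥0) (hv : v ≠ 0) :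
    Integrable (fun x : ℝ => x ^ 2) (gaussianReal 0 v) := by
  rw [erm_integrable_gauss_iff v hv]
  have hb : 0 < (2*(v:ℝ))⁻¹ := by
    have : 0 < (v:ℝ) := by positivity
    positivity
  have := ((erm_integrable_sq_exp hb).const_mul (Real.sqrt (2 * π * v))⁻¹)
  apply this.congr
  filter_upwards with x
  rw [erm_pdf_eq]
  ring

private lemma erm_integral_id_gauss (v : ℝ≥0) (hv : v ≠ 0) :
    ∫ x, x ∂(gaussianReal 0 v) = 0 := by
  rw [erm_integral_gauss_eq v hv]
  have hb : 0 < (2*(v:ℝ))⁻¹ := by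
    have : 0 < (v:ℝ) := by positivity
    positivity
  calc ∫ x, gaussianPDFReal 0 v x * x
      = ∫ x, (Real.sqrt (2 * π * v))⁻¹ * (x * Real.exp (-(2*(v:ℝ))⁻¹ * x ^ 2)) := by
        congr 1; ext x; rw [erm_pdf_eq]; ring
    _ = 0 := by rw [MeasureTheory.integral_const_mul, erm_integral_mul_exp_sq hb, mul_zero]

private lemma erm_integral_sq_gauss (v : ℝ≥0) (hv : v ≠ 0) :
    ∫ x, x ^ 2 ∂(gaussianReal 0 v) = (v : ℝ) := by
  rw [erm_integral_gauss_eq v hv]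
  have hv' : 0 < (v:ℝ) := by positivity
  have hb : 0 < (2*(v:ℝ))⁻¹ := by positivity
  calc ∫ x, gaussianPDFReal 0 v x * x ^ 2
      = ∫ x, (Real.sqrt (2 * π * v))⁻¹ * (x ^ 2 * Real.exp (-(2*(v:ℝ))⁻¹ * x ^ 2)) := by
        congr 1; ext x; rw [erm_pdf_eq]; ring
    _ = (Real.sqrt (2 * π * v))⁻¹ * ((2*(2*(v:ℝ))⁻¹)⁻¹ * Real.sqrt (π / (2*(v:ℝ))⁻¹)) := by
        rw [MeasureTheory.integral_const_mul, erm_integral_sq_mul_exp_sq hb]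
    _ = (v : ℝ) := by
        have h1 : π / (2*(v:ℝ))⁻¹ = 2 * π * v := by field_simp
        have h2 : (2*(2*(v:ℝ))⁻¹)⁻¹ = (v:ℝ) := by field_simp
        rw [h1, h2]
        have h3 : (0:ℝ) < 2 * π * v := by positivity
        rw [inv_mul_eq_div, mul_div_assoc]
        rw [div_self (by positivity : Real.sqrt (2*π*(v:ℝ)) ≠ 0), mul_one]

private lemma erm_integral_pi_prod {n : ℕ} (μ : Fin n → Measure ℝ)
    [h : ∀ i, SigmaFinite (μ i)] (f : Fin n → ℝ → ℝ) :
    ∫ x, ∏ i, f i (x i) ∂(Measure.pi μ) = ∏ i, ∫ x, f i x ∂(μ i) :=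
  MeasureTheory.integral_fintype_prod_eq_prod (μ := μ) f

private lemma erm_integrable_pi_prod {n : ℕ} (μ : Fin n → Measure ℝ)
    [h : ∀ i, SigmaFinite (μ i)]
    {f : Fin n → ℝ → ℝ} (hf : ∀ i, Integrable (f i) (μ i)) :
    Integrable (fun x : Fin n → ℝ => ∏ i, f i (x i)) (Measure.pi μ) :=
  MeasureTheory.Integrable.fintype_prod_dep (μ := μ) hf

private lemma erm_prod_eq_mul_pair {n : ℕ} (i j : Fin n) (x : Fin n → ℝ) :
    x i * x j = ∏ k, ((if k = i then x k else 1) * (if k = j then x k else 1)) := by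
  rw [Finset.prod_mul_distrib, Finset.prod_ite_eq' Finset.univ i (fun k => x k),
    Finset.prod_ite_eq' Finset.univ j (fun k => x k)]
  simp

private lemma erm_key_second_moment {n : ℕ} (μ : Fin n → Measure ℝ)
    [∀ i, IsProbabilityMeasure (μ i)]
    (m2 : Fin n → ℝ)
    (h1 : ∀ i, Integrable (fun x : ℝ => x) (μ i))
    (h0 : ∀ i, ∫ x, x ∂(μ i) = 0)
    (h2i : ∀ i, Integrable (fun x : ℝ => x ^ 2) (μ i))
    (h2 : ∀ i, ∫ x, x ^ 2 ∂(μ i) = m2 i)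
    (c : Fin n → ℝ) :
    ∫ ω, (∑ i, c i * ω i) ^ 2 ∂(Measure.pi μ) = ∑ i, c i ^ 2 * m2 i := by
  have hfint : ∀ i j : Fin n, Integrable (fun ω : Fin n → ℝ => ω i * ω j) (Measure.pi μ) := by
    intro i j
    have := erm_integrable_pi_prod μ
      (f := fun k x => (if k = i then x else 1) * (if k = j then x else 1)) ?_
    · exact this.congr (by filter_upwards with x; rw [erm_prod_eq_mul_pair])
    · intro k
      rcases eq_or_ne k i with rfl | hki
      · rcases eq_or_ne k j with rfl | hkj
        · exact (h2i k).congr (by filter_upwards with x; simp [sq])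
        · simp only [if_pos rfl, if_neg hkj, mul_one]
          exact h1 k
      · rcases eq_or_ne k j with rfl | hkj
        · simp only [if_neg hki, if_pos rfl, one_mul]
          exact h1 k
        · simp only [if_neg hki, if_neg hkj, mul_one]
          exact integrable_const 1
  have hval : ∀ i j : Fin n, ∫ ω, ω i * ω j ∂(Measure.pi μ)
      = if i = j then m2 i else 0 := by
    intro i j
    have heq : ∫ ω, ω i * ω j ∂(Measure.pi μ)
        = ∏ k, ∫ x, (if k = i then x else 1) * (if k = j then x else 1) ∂(μ k) := by
      rw [← erm_integral_pi_prod μ]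
      congr 1; ext ω; rw [erm_prod_eq_mul_pair]
    by_cases hij : i = j
    · subst hij
      rw [heq, if_pos rfl]
      rw [Finset.prod_eq_single i]
      · rw [← h2 i]
        congr 1; ext x
        simp [sq]
      · intro k _ hk
        simp only [if_neg hk, one_mul, integral_const, measure_univ, ENNReal.toReal_one, probReal_univ,
          smul_eq_mul, mul_one]
      · simp
    · rw [heq, if_neg hij]
      rw [Finset.prod_eq_zero (Finset.mem_univ i)]
      simp only [if_pos rfl, if_neg hij, mul_one]
      exact h0 i
  calc ∫ ω, (∑ i, c i * ω i) ^ 2 ∂(Measure.pi μ)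
      = ∫ ω, ∑ i, ∑ j, (c i * c j) * (ω i * ω j) ∂(Measure.pi μ) := by
        congr 1; ext ω
        rw [sq, Finset.sum_mul_sum]
        congr 1; ext i; congr 1; ext j; ring
    _ = ∑ i, ∑ j, (c i * c j) * ∫ ω, ω i * ω j ∂(Measure.pi μ) := by
        rw [integral_finset_sum _ (fun i _ => integrable_finset_sum _
          (fun j _ => (hfint i j).const_mul _))]
        congr 1; ext i
        rw [integral_finset_sum _ (fun j _ => (hfint i j).const_mul _)]
        congr 1; ext j
        rw [MeasureTheory.integral_const_mul]
    _ = ∑ i, c i ^ 2 * m2 i := by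
        refine Finset.sum_congr rfl fun i _ => ?_
        rw [Finset.sum_eq_single i]
        · rw [hval, if_pos rfl]; ring
        · intro j _ hj
          rw [hval, if_neg fun h => hj h.symm, mul_zero]
        · intro h
          exact absurd (Finset.mem_univ i) h

/-- The closed-form risk functional. -/
private noncomputable def ermG (S Kr : ℝ) (α : Fin 4 → ℝ) : ℝ :=
  (1/2) * (S * (α 0 + α 2 - 1)^2 + S * (α 1 + α 3 - 1)^2 + S * (α 2 - 1)^2
    + S * (α 3 - 1)^2 + Kr * (α 2)^2 + Kr * (α 3)^2)

private lemma erm_risk_closed (w : ℝ≥0) (hw : w ≠ 0) (α : Fin 4 → ℝ) :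
    ∫ ω : Fin 6 → ℝ, (1 / 2) * (α 0 * ω 0 + α 1 * ω 1
        + α 2 * (ω 0 + ω 2 + ω 4) + α 3 * (ω 1 + ω 3 + ω 5)
        - (ω 0 + ω 1 + ω 2 + ω 3)) ^ 2
      ∂(Measure.pi (fun i : Fin 6 =>
          if (i : ℕ) < 4 then gaussianReal 0 w else gaussianReal 0 1))
    = ermG (w : ℝ) 1 α := by
  set μ : Fin 6 → Measure ℝ := fun i =>
    if (i : ℕ) < 4 then gaussianReal 0 w else gaussianReal 0 1 with hμ
  have hprob : ∀ i, IsProbabilityMeasure (μ i) := by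
    intro i
    rw [hμ]
    dsimp only
    split <;> infer_instance
  haveI := hprob
  set c : Fin 6 → ℝ := ![α 0 + α 2 - 1, α 1 + α 3 - 1, α 2 - 1, α 3 - 1, α 2, α 3] with hc
  set m2 : Fin 6 → ℝ := ![(w:ℝ), w, w, w, 1, 1] with hm2
  have h1 : ∀ i, Integrable (fun x : ℝ => x) (μ i) := by
    intro i; rw [hμ]; dsimp only; split
    · exact erm_integrable_id_gauss w hw
    · exact erm_integrable_id_gauss 1 one_ne_zero
  have h0 : ∀ i, ∫ x, x ∂(μ i) = 0 := by
    intro i; rw [hμ]; dsimp only; split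
    · exact erm_integral_id_gauss w hw
    · exact erm_integral_id_gauss 1 one_ne_zero
  have h2i : ∀ i, Integrable (fun x : ℝ => x ^ 2) (μ i) := by
    intro i; rw [hμ]; dsimp only; split
    · exact erm_integrable_sq_gauss w hw
    · exact erm_integrable_sq_gauss 1 one_ne_zero
  have h2 : ∀ i, ∫ x, x ^ 2 ∂(μ i) = m2 i := by
    intro i; rw [hμ, hm2]
    dsimp only
    fin_cases i <;> norm_num
    · exact erm_integral_sq_gauss w hw
    · exact erm_integral_sq_gauss w hw
    · exact erm_integral_sq_gauss w hw
    · exact erm_integral_sq_gauss w hw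
    · simpa using erm_integral_sq_gauss 1 one_ne_zero
    · simpa using erm_integral_sq_gauss 1 one_ne_zero
  have hrw : ∀ ω : Fin 6 → ℝ, (α 0 * ω 0 + α 1 * ω 1
        + α 2 * (ω 0 + ω 2 + ω 4) + α 3 * (ω 1 + ω 3 + ω 5)
        - (ω 0 + ω 1 + ω 2 + ω 3)) = ∑ i, c i * ω i := by
    intro ω
    have hev : ∑ i, c i * ω i = (α 0 + α 2 - 1) * ω 0 + (α 1 + α 3 - 1) * ω 1
        + (α 2 - 1) * ω 2 + (α 3 - 1) * ω 3 + α 2 * ω 4 + α 3 * ω 5 := by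
      rw [Fin.sum_univ_six, hc]
      rfl
    rw [hev]
    ring
  calc ∫ ω : Fin 6 → ℝ, (1 / 2) * (α 0 * ω 0 + α 1 * ω 1
        + α 2 * (ω 0 + ω 2 + ω 4) + α 3 * (ω 1 + ω 3 + ω 5)
        - (ω 0 + ω 1 + ω 2 + ω 3)) ^ 2 ∂(Measure.pi μ)
      = (1/2) * ∫ ω : Fin 6 → ℝ, (∑ i, c i * ω i) ^ 2 ∂(Measure.pi μ) := by
        rw [MeasureTheory.integral_const_mul]
        congr 1
        apply integral_congr_ae
        filter_upwards with ω
        rw [hrw ω]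
    _ = (1/2) * ∑ i, c i ^ 2 * m2 i := by
        rw [erm_key_second_moment μ m2 h1 h0 h2i h2 c]
    _ = ermG (w:ℝ) 1 α := by
        have hev : ∑ i, c i ^ 2 * m2 i = (α 0 + α 2 - 1) ^ 2 * (w:ℝ)
            + (α 1 + α 3 - 1) ^ 2 * (w:ℝ) + (α 2 - 1) ^ 2 * (w:ℝ)
            + (α 3 - 1) ^ 2 * (w:ℝ) + (α 2) ^ 2 * 1 + (α 3) ^ 2 * 1 := by
          rw [Fin.sum_univ_six, hc, hm2]
          rfl
        rw [hev, ermG]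
        ring

private lemma ermG_strict (S Kr : ℝ) (hS : 0 < S) (hK : 0 < Kr) (α : Fin 4 → ℝ)
    (h : α ≠ fun i : Fin 4 => if (i : ℕ) < 2 then Kr / (Kr + S) else S / (Kr + S)) :
    ermG S Kr (fun i : Fin 4 => if (i : ℕ) < 2 then Kr / (Kr + S) else S / (Kr + S))
      < ermG S Kr α := by
  have hKS : (0:ℝ) < Kr + S := by linarith
  have hKS' : Kr + S ≠ 0 := ne_of_gt hKS
  set A := Kr / (Kr + S) with hA
  set C := S / (Kr + S) with hC
  have hdis : α 0 ≠ A ∨ α 1 ≠ A ∨ α 2 ≠ C ∨ α 3 ≠ C := by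
    by_contra hcon
    push_neg at hcon
    obtain ⟨e0, e1, e2, e3⟩ := hcon
    apply h
    funext i
    fin_cases i
    · simpa using e0
    · simpa using e1
    · simpa using e2
    · simpa using e3
  have hGstar : ermG S Kr (fun i : Fin 4 => if (i : ℕ) < 2 then A else C)
      = (1/2) * ((S * (A + C - 1)^2 + S * (C - 1)^2 + Kr * C^2)
          + (S * (A + C - 1)^2 + S * (C - 1)^2 + Kr * C^2)) := by
    rw [ermG]
    norm_num [show ((0:Fin 4):ℕ) = 0 from rfl, show ((1:Fin 4):ℕ) = 1 from rfl,
      show ((2:Fin 4):ℕ) = 2 from rfl, show ((3:Fin 4):ℕ) = 3 from rfl]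
    ring
  have idc : ∀ x y : ℝ, S * (x + y - 1)^2 + S * (y - 1)^2 + Kr * y^2
      = (S * (A + C - 1)^2 + S * (C - 1)^2 + Kr * C^2)
        + (S * (x + y - 1)^2 + (Kr + S) * (y - C)^2) := by
    intro x y
    rw [hA, hC]
    field_simp
    ring
  have nn : ∀ x y : ℝ, 0 ≤ S * (x + y - 1)^2 + (Kr + S) * (y - C)^2 := fun x y =>
    add_nonneg (mul_nonneg hS.le (sq_nonneg _)) (mul_nonneg hKS.le (sq_nonneg _))
  have pos : ∀ x y : ℝ, (x ≠ A ∨ y ≠ C) → 0 < S * (x + y - 1)^2 + (Kr + S) * (y - C)^2 := by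
    intro x y hxy
    rcases eq_or_ne y C with rfl | hy
    · have hx : x ≠ A := by
        rcases hxy with h' | h'
        · exact h'
        · exact absurd rfl h'
      have h0 : x + C - 1 ≠ 0 := by
        intro h0
        apply hx
        have hx1 : x = 1 - C := by linarith
        rw [hx1, hC, hA]
        field_simp
        ring
      have h1 : 0 < (x + C - 1)^2 := ((pow_ne_zero 2 h0).symm).lt_of_le (sq_nonneg _)
      have h2 := mul_pos hS h1
      nlinarith [mul_nonneg hKS.le (sq_nonneg (C - C))]
    · have h1 : 0 < (y - C)^2 :=
        ((pow_ne_zero 2 (sub_ne_zero.mpr hy)).symm).lt_of_le (sq_nonneg _)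
      nlinarith [mul_nonneg hS.le (sq_nonneg (x + y - 1))]
  have e1 := idc (α 0) (α 2)
  have e2 := idc (α 1) (α 3)
  have hGα : ermG S Kr α = (1/2) * ((S * (α 0 + α 2 - 1)^2 + S * (α 2 - 1)^2 + Kr * (α 2)^2)
      + (S * (α 1 + α 3 - 1)^2 + S * (α 3 - 1)^2 + Kr * (α 3)^2)) := by
    rw [ermG]; ring
  have hpos : 0 < (S * (α 0 + α 2 - 1)^2 + (Kr + S) * (α 2 - C)^2)
      + (S * (α 1 + α 3 - 1)^2 + (Kr + S) * (α 3 - C)^2) := by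
    rcases hdis with h' | h' | h' | h'
    · exact add_pos_of_pos_of_nonneg (pos _ _ (Or.inl h')) (nn _ _)
    · exact add_pos_of_nonneg_of_pos (nn _ _) (pos _ _ (Or.inl h'))
    · exact add_pos_of_pos_of_nonneg (pos _ _ (Or.inr h')) (nn _ _)
    · exact add_pos_of_nonneg_of_pos (nn _ _) (pos _ _ (Or.inr h'))
  rw [hGstar, hGα]
  linarith

private lemma ermG_sum {K : ℕ} (v : Fin K → ℝ≥0) (α : Fin 4 → ℝ) :
    ∑ e, ermG ((v e : ℝ)) 1 α = ermG (∑ e, (v e : ℝ)) (K : ℝ) α := by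
  simp only [ermG]
  have hx : ∀ x : ℝ, 1/2 * (x * (α 0 + α 2 - 1)^2 + x * (α 1 + α 3 - 1)^2 + x * (α 2 - 1)^2
      + x * (α 3 - 1)^2 + 1 * (α 2)^2 + 1 * (α 3)^2)
      = (((α 0 + α 2 - 1)^2 + (α 1 + α 3 - 1)^2 + (α 2 - 1)^2 + (α 3 - 1)^2)/2) * x
        + ((α 2)^2 + (α 3)^2)/2 := by
    intro x; ring
  simp_rw [hx]
  rw [Finset.sum_add_distrib, ← Finset.mul_sum, Finset.sum_const, Finset.card_univ,
    Fintype.card_fin, nsmul_eq_mul]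
  ring

end ErmGaussianAux

/-- The worked Gaussian example (Appendix B.1): with
`x₁, x₂, ε₁, ε₂ ~ N(0, vᵉ)` independent, `y = x₁ + x₂ + ε₁ + ε₂` and
`zᵢ = xᵢ + εᵢ + N(0,1)`, the squared risk of the linear predictor on
`(x₁, x₂, z₁, z₂)` is uniquely minimized at
`(1/(1+vᵉ), 1/(1+vᵉ), vᵉ/(1+vᵉ), vᵉ/(1+vᵉ))`, and the averaged (summed) risk
over `K` environments is uniquely minimized at
`(K/(K+Σvᵉ), K/(K+Σvᵉ), Σvᵉ/(K+Σvᵉ), Σvᵉ/(K+Σvᵉ))`. -/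
theorem erm_gaussian_example {K : ℕ} (hK : 0 < K)
    (v : Fin K → NNReal) (hv : ∀ e, 0 < v e)
    (meas : NNReal → Measure (Fin 6 → ℝ))
    (hmeas : ∀ w, meas w = Measure.pi
      (fun i : Fin 6 => if (i : ℕ) < 4 then gaussianReal 0 w else gaussianReal 0 1))
    (R : NNReal → (Fin 4 → ℝ) → ℝ)
    (hR : ∀ (w : NNReal) (α : Fin 4 → ℝ), R w α =
      ∫ ω, (1 / 2) * (α 0 * ω 0 + α 1 * ω 1
          + α 2 * (ω 0 + ω 2 + ω 4) + α 3 * (ω 1 + ω 3 + ω 5)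
          - (ω 0 + ω 1 + ω 2 + ω 3)) ^ 2 ∂(meas w)) :
    (∀ (e : Fin K) (α : Fin 4 → ℝ),
      α ≠ (fun i : Fin 4 => if (i : ℕ) < 2 then 1 / (1 + (v e : ℝ))
            else (v e : ℝ) / (1 + (v e : ℝ))) →
      R (v e) (fun i => if (i : ℕ) < 2 then 1 / (1 + (v e : ℝ))
            else (v e : ℝ) / (1 + (v e : ℝ))) < R (v e) α) ∧
    (∀ α : Fin 4 → ℝ,
      α ≠ (fun i : Fin 4 => if (i : ℕ) < 2 then (K : ℝ) / ((K : ℝ) + ∑ e, (v e : ℝ))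
            else (∑ e, (v e : ℝ)) / ((K : ℝ) + ∑ e, (v e : ℝ))) →
      (∑ e, R (v e) (fun i => if (i : ℕ) < 2 then (K : ℝ) / ((K : ℝ) + ∑ e, (v e : ℝ))
            else (∑ e, (v e : ℝ)) / ((K : ℝ) + ∑ e, (v e : ℝ))))
        < ∑ e, R (v e) α) := by
  have hRG : ∀ (w : NNReal), w ≠ 0 → ∀ β : Fin 4 → ℝ, R w β = ermG (w : ℝ) 1 β := by
    intro w hw β
    rw [hR, hmeas, erm_risk_closed w hw β]
  constructor
  · intro e α hα
    have hw : v e ≠ 0 := (hv e).ne'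
    have hwpos : (0:ℝ) < (v e : ℝ) := by exact_mod_cast hv e
    rw [hRG (v e) hw, hRG (v e) hw]
    exact ermG_strict ((v e : ℝ)) 1 hwpos one_pos α hα
  · intro α hα
    have hS : (0:ℝ) < ∑ e, (v e : ℝ) := by
      haveI : Nonempty (Fin K) := Fin.pos_iff_nonempty.mp hK
      apply Finset.sum_pos
      · intro e _
        exact_mod_cast hv e
      · exact Finset.univ_nonempty
    have hKpos : (0:ℝ) < (K : ℝ) := by exact_mod_cast hK
    have hsum1 : ∀ β : Fin 4 → ℝ, ∑ e, R (v e) β = ermG (∑ e, (v e : ℝ)) (K : ℝ) β := by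
      intro β
      rw [← ermG_sum v β]
      exact Finset.sum_congr rfl fun e _ => hRG (v e) (hv e).ne' β
    rw [hsum1, hsum1]
    exact ermG_strict (∑ e, (v e : ℝ)) (K : ℝ) hS hKpos α hα
end
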